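/- Define Φ[α,β,γ](X) = 1_{AB} Tr(X) + α (1_A ⊗ Tr_A(X)) + β (Tr_B(X) ⊗ 1_B) + γ X on matrices over ℂ^{d_A} ⊗ ℂ^{d_B}. If Φ[α,β,γ] is positive (maps positive semidefinite matrices to positive semidefinite matrices), then α ≥ -1, β ≥ -1, 1 + α + β + γ ≥ 0, and 1 + (α+β)/n + γ ≥ 0, where n = min(d_A, d_B). -/

import Mathlib

open Matrix Kronecker ComplexOrder

lemma outer_psd {m : Type*} [Fintype m] [DecidableEq m] (v : m → ℂ) :
    (Matrix.of fun p q => v p * (starRingEnd ℂ) (v q)).PosSemidef := by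
  rw [Matrix.posSemidef_iff_dotProduct_mulVec]
  constructor
  · ext p q
    simp [Matrix.conjTranspose_apply, mul_comm]
  · intro x
    have : dotProduct (star x) ((Matrix.of fun p q => v p * (starRingEnd ℂ) (v q)) *ᵥ x)
        = (∑ p, (starRingEnd ℂ) (x p) * v p) * (starRingEnd ℂ) (∑ p, (starRingEnd ℂ) (x p) * v p) := by
      simp only [dotProduct, mulVec, Matrix.of_apply, Pi.star_apply, map_sum, _root_.map_mul,
        RingHom.id_apply, starRingEnd_self_apply, Finset.mul_sum, Finset.sum_mul]
      rw [Finset.sum_comm]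
      congr 1; ext p; congr 1; ext q
      simp [RCLike.star_def]
      ring
    rw [this, Complex.mul_conj]
    exact Complex.zero_le_real.2 (Complex.normSq_nonneg _)

lemma psd_diag_nonneg {m : Type*} [Fintype m] [DecidableEq m] {M : Matrix m m ℂ}
    (h : M.PosSemidef) (p : m) : 0 ≤ M p p := by
  have := h.dotProduct_mulVec_nonneg (Pi.single p 1)
  simpa [dotProduct, mulVec, Pi.single_apply, apply_ite, Finset.sum_ite_eq', Finset.mul_sum] using this

lemma sum_ite_val {d : ℕ} (m : ℕ) (f : Fin d → ℂ) :
    ∑ j : Fin d, (if m = (j : ℕ) then f j else 0) = if h : m < d then f ⟨m, h⟩ else 0 := by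
  split_ifs with h
  · rw [Finset.sum_eq_single (⟨m, h⟩ : Fin d)]
    · simp
    · intro j _ hj; rw [if_neg]; intro hmj; exact hj (by simp [Fin.ext_iff, hmj.symm])
    · simp
  · apply Finset.sum_eq_zero
    intro j _
    rw [if_neg]; intro hmj; omega

lemma count_min (dA dB : ℕ) : ∑ i : Fin dA, (if (i : ℕ) < dB then (1:ℂ) else 0) = (min dA dB : ℕ) := by
  rw [Fin.sum_univ_eq_sum_range (fun i => if i < dB then (1:ℂ) else 0)]
  rw [Finset.sum_boole,
    show (Finset.range dA).filter (fun i => i < dB) = Finset.range (min dA dB) by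
      ext x; simp [Nat.lt_min],
    Finset.card_range]

theorem Phi_positive_necessary (dA dB : ℕ) (hA : 2 ≤ dA) (hB : 2 ≤ dB) (α β γ : ℝ) :
    let Phi : Matrix (Fin dA × Fin dB) (Fin dA × Fin dB) ℂ →
        Matrix (Fin dA × Fin dB) (Fin dA × Fin dB) ℂ :=
      fun X =>
        X.trace • (1 : Matrix (Fin dA × Fin dB) (Fin dA × Fin dB) ℂ)
        + (α : ℂ) • ((1 : Matrix (Fin dA) (Fin dA) ℂ) ⊗ₖ
            Matrix.of (fun j j' : Fin dB => ∑ i : Fin dA, X (i, j) (i, j')))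
        + (β : ℂ) • ((Matrix.of (fun i i' : Fin dA => ∑ j : Fin dB, X (i, j) (i', j)))
            ⊗ₖ (1 : Matrix (Fin dB) (Fin dB) ℂ))
        + (γ : ℂ) • X
    (∀ X, X.PosSemidef → (Phi X).PosSemidef) →
      -1 ≤ α ∧ -1 ≤ β ∧ 0 ≤ 1 + α + β + γ ∧
        0 ≤ 1 + (α + β) / (min dA dB : ℝ) + γ := by
  intro Phi hpos
  have hpos' : ∀ X : Matrix (Fin dA × Fin dB) (Fin dA × Fin dB) ℂ, X.PosSemidef →
      (X.trace • (1 : Matrix (Fin dA × Fin dB) (Fin dA × Fin dB) ℂ)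
        + (α : ℂ) • ((1 : Matrix (Fin dA) (Fin dA) ℂ) ⊗ₖ
            Matrix.of (fun j j' : Fin dB => ∑ i : Fin dA, X (i, j) (i, j')))
        + (β : ℂ) • ((Matrix.of (fun i i' : Fin dA => ∑ j : Fin dB, X (i, j) (i', j)))
            ⊗ₖ (1 : Matrix (Fin dB) (Fin dB) ℂ))
        + (γ : ℂ) • X).PosSemidef := hpos
  clear hpos
  set i0 : Fin dA := ⟨0, by omega⟩
  set i1 : Fin dA := ⟨1, by omega⟩
  set j0 : Fin dB := ⟨0, by omega⟩
  set j1 : Fin dB := ⟨1, by omega⟩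
  set v1 : Fin dA × Fin dB → ℂ := fun q => if q = (i0, j0) then 1 else 0 with hv1
  set X1 : Matrix (Fin dA × Fin dB) (Fin dA × Fin dB) ℂ :=
    Matrix.of fun p q => v1 p * (starRingEnd ℂ) (v1 q) with hX1
  have hPX1 := hpos' X1 (outer_psd v1)
  -- diagonal entry computations for X1
  have htr1 : X1.trace = 1 := by
    simp [hX1, Matrix.trace, Matrix.diag, hv1, apply_ite, Finset.sum_ite_eq']
  have hM1 : ∀ b : Fin dB, (∑ i : Fin dA, X1 (i, b) (i, b)) = if b = j0 then 1 else 0 := by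
    intro b
    by_cases hb : b = j0
    · subst hb
      simp [hX1, hv1, Prod.ext_iff, ite_and, apply_ite (starRingEnd ℂ), Finset.sum_ite_eq']
    · simp [hX1, hv1, Prod.ext_iff, hb, ite_and]
  have hN1 : ∀ a : Fin dA, (∑ j : Fin dB, X1 (a, j) (a, j)) = if a = i0 then 1 else 0 := by
    intro a
    by_cases ha : a = i0
    · subst ha
      simp [hX1, hv1, Prod.ext_iff, ite_and, apply_ite (starRingEnd ℂ), Finset.sum_ite_eq']
    · simp [hX1, hv1, Prod.ext_iff, ha, ite_and]
  have hD1 : ∀ p : Fin dA × Fin dB, X1 p p = if p = (i0, j0) then 1 else 0 := by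
    intro p
    by_cases hp : p = (i0, j0) <;> simp [hX1, hv1, hp]
  have hne1 : i1 ≠ i0 := by simp [i1, i0, Fin.ext_iff]
  have hne2 : j1 ≠ j0 := by simp [j1, j0, Fin.ext_iff]
  have entry : ∀ p : Fin dA × Fin dB,
      (X1.trace • (1 : Matrix (Fin dA × Fin dB) (Fin dA × Fin dB) ℂ)
        + (α : ℂ) • ((1 : Matrix (Fin dA) (Fin dA) ℂ) ⊗ₖ
            Matrix.of (fun j j' : Fin dB => ∑ i : Fin dA, X1 (i, j) (i, j')))
        + (β : ℂ) • ((Matrix.of (fun i i' : Fin dA => ∑ j : Fin dB, X1 (i, j) (i', j)))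
            ⊗ₖ (1 : Matrix (Fin dB) (Fin dB) ℂ))
        + (γ : ℂ) • X1) p p
      = 1 + α * (if p.2 = j0 then 1 else 0) + β * (if p.1 = i0 then 1 else 0)
        + γ * (if p = (i0, j0) then 1 else 0) := by
    intro p
    rcases p with ⟨a, b⟩
    simp only [Matrix.add_apply, Matrix.smul_apply, smul_eq_mul, Matrix.kroneckerMap_apply,
      Matrix.one_apply_eq, Matrix.of_apply, htr1, hM1, hN1]
    simp only [hD1]
    ring
  have hα : -1 ≤ α := by
    have h1 := psd_diag_nonneg hPX1 (i1, j0)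
    rw [entry (i1, j0)] at h1
    have h2 := (Complex.le_def.1 h1).1
    simp [hne1, Prod.ext_iff] at h2
    linarith
  have hβ : -1 ≤ β := by
    have h1 := psd_diag_nonneg hPX1 (i0, j1)
    rw [entry (i0, j1)] at h1
    have h2 := (Complex.le_def.1 h1).1
    simp [hne2, Prod.ext_iff] at h2
    linarith
  have hsum : 0 ≤ 1 + α + β + γ := by
    have h1 := psd_diag_nonneg hPX1 (i0, j0)
    rw [entry (i0, j0)] at h1
    have h2 := (Complex.le_def.1 h1).1
    simp [Prod.ext_iff] at h2
    linarith
  refine ⟨hα, hβ, hsum, ?_⟩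
  -- maximally entangled state
  clear hPX1 htr1 hM1 hN1 hD1 entry
  set v2 : Fin dA × Fin dB → ℂ := fun p => if (p.1 : ℕ) = (p.2 : ℕ) then 1 else 0 with hv2
  set X2 : Matrix (Fin dA × Fin dB) (Fin dA × Fin dB) ℂ :=
    Matrix.of fun p q => v2 p * (starRingEnd ℂ) (v2 q) with hX2
  have hconj : ∀ q, (starRingEnd ℂ) (v2 q) = v2 q := by
    intro q; simp only [hv2]; split_ifs <;> simp
  have hsq : ∀ q, v2 q * v2 q = v2 q := by
    intro q; simp only [hv2]; split_ifs <;> ring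
  have hS : ∑ p : Fin dA × Fin dB, v2 p = ((min dA dB : ℕ) : ℂ) := by
    rw [Fintype.sum_prod_type, ← count_min dA dB]
    refine Finset.sum_congr rfl fun i _ => ?_
    rw [show (∑ j : Fin dB, v2 (i, j)) = ∑ j : Fin dB,
        (if (i : ℕ) = (j : ℕ) then (fun _ : Fin dB => (1:ℂ)) j else 0) from rfl,
      sum_ite_val]
    split_ifs <;> rfl
  have hvv : dotProduct (star v2) v2 = ((min dA dB : ℕ) : ℂ) := by
    rw [← hS]
    refine Finset.sum_congr rfl fun p _ => ?_
    have : star (v2 p) = v2 p := hconj p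
    rw [Pi.star_apply, this, hsq]
  have htr2 : X2.trace = ((min dA dB : ℕ) : ℂ) := by
    rw [← hS]
    refine Finset.sum_congr rfl fun p _ => ?_
    simp only [hX2, Matrix.diag_apply, Matrix.of_apply, hconj, hsq]
  have hM2 : ∀ j j' : Fin dB, (∑ i : Fin dA, X2 (i, j) (i, j'))
      = if (j : ℕ) = (j' : ℕ) ∧ (j : ℕ) < dA then 1 else 0 := by
    intro j j'
    rw [show (∑ i : Fin dA, X2 (i, j) (i, j')) = ∑ i : Fin dA,
        (if (j : ℕ) = (i : ℕ) then
          (fun i : Fin dA => if (i : ℕ) = (j' : ℕ) then (1:ℂ) else 0) i else 0) by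
      refine Finset.sum_congr rfl fun i _ => ?_
      simp only [hX2, Matrix.of_apply, hconj]
      by_cases h1 : (i : ℕ) = (j : ℕ) <;> by_cases h2 : (i : ℕ) = (j' : ℕ) <;>
        simp [hv2, h1, h2, eq_comm]
      , sum_ite_val]
    split_ifs with h1 h2 h3 h4 <;> simp_all <;> omega
  have hN2 : ∀ a a' : Fin dA, (∑ j : Fin dB, X2 (a, j) (a', j))
      = if (a : ℕ) = (a' : ℕ) ∧ (a : ℕ) < dB then 1 else 0 := by
    intro a a'
    rw [show (∑ j : Fin dB, X2 (a, j) (a', j)) = ∑ j : Fin dB,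
        (if (a : ℕ) = (j : ℕ) then
          (fun j : Fin dB => if (a' : ℕ) = (j : ℕ) then (1:ℂ) else 0) j else 0) by
      refine Finset.sum_congr rfl fun j _ => ?_
      simp only [hX2, Matrix.of_apply, hconj]
      by_cases h1 : (a : ℕ) = (j : ℕ) <;> by_cases h2 : (a' : ℕ) = (j : ℕ) <;>
        simp [hv2, h1, h2, eq_comm]
      , sum_ite_val]
    split_ifs with h1 h2 h3 h4 <;> simp_all <;> omega
  have hKv1 : ((1 : Matrix (Fin dA) (Fin dA) ℂ) ⊗ₖ
      Matrix.of (fun j j' : Fin dB => ∑ i : Fin dA, X2 (i, j) (i, j'))) *ᵥ v2 = v2 := by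
    funext p
    rcases p with ⟨a, b⟩
    simp only [Matrix.mulVec, dotProduct, Fintype.sum_prod_type, Matrix.kroneckerMap_apply,
      Matrix.of_apply, Matrix.one_apply, hM2, ite_mul, mul_ite, one_mul, zero_mul, mul_one,
      mul_zero, Finset.sum_ite_irrel, Finset.sum_const_zero, Finset.sum_ite_eq,
      Finset.mem_univ, if_true]
    have hcg : ∀ (x : Fin dA) (x1 : Fin dB),
        (if (b : ℕ) = (x1 : ℕ) ∧ (b : ℕ) < dA then (if a = x then v2 (x, x1) else 0) else 0)
        = if a = x then (if b = x1 then (if (b : ℕ) < dA then v2 (x, x1) else 0) else 0)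
          else 0 := by
      intro x x1
      by_cases h1 : a = x <;> by_cases h2 : b = x1 <;> by_cases h3 : (b : ℕ) < dA <;>
        simp [h1, h2, h3, Fin.val_inj]
    rw [Finset.sum_congr rfl fun x _ => Finset.sum_congr rfl fun x1 _ => hcg x x1]
    simp only [Finset.sum_ite_irrel, Finset.sum_const_zero, Finset.sum_ite_eq,
      Finset.mem_univ, if_true]
    by_cases h : (a : ℕ) = (b : ℕ)
    · have hb : (b : ℕ) < dA := h ▸ a.isLt
      simp [hb]
    · simp [hv2, h]
  have hKv2 : ((Matrix.of (fun i i' : Fin dA => ∑ j : Fin dB, X2 (i, j) (i', j)))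
      ⊗ₖ (1 : Matrix (Fin dB) (Fin dB) ℂ)) *ᵥ v2 = v2 := by
    funext p
    rcases p with ⟨a, b⟩
    simp only [Matrix.mulVec, dotProduct, Fintype.sum_prod_type, Matrix.kroneckerMap_apply,
      Matrix.of_apply, Matrix.one_apply, hN2, ite_mul, mul_ite, one_mul, zero_mul, mul_one,
      mul_zero, Finset.sum_ite_irrel, Finset.sum_const_zero, Finset.sum_ite_eq,
      Finset.mem_univ, if_true]
    have hcg : ∀ x : Fin dA,
        (if (a : ℕ) = (x : ℕ) ∧ (a : ℕ) < dB then v2 (x, b) else 0)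
        = if a = x then (if (a : ℕ) < dB then v2 (x, b) else 0) else 0 := by
      intro x
      by_cases h1 : a = x <;> by_cases h3 : (a : ℕ) < dB <;>
        simp [h1, h3, Fin.val_inj]
    rw [Finset.sum_congr rfl fun x _ => hcg x, Finset.sum_ite_eq, if_pos (Finset.mem_univ a)]
    by_cases h : (a : ℕ) = (b : ℕ)
    · have hb : (a : ℕ) < dB := h ▸ b.isLt
      simp [hb]
    · simp [hv2, h]
  have hX2v : X2 *ᵥ v2 = ((min dA dB : ℕ) : ℂ) • v2 := by
    funext p
    simp only [Matrix.mulVec, dotProduct, hX2, Matrix.of_apply, Pi.smul_apply, smul_eq_mul]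
    calc ∑ q, v2 p * (starRingEnd ℂ) (v2 q) * v2 q
        = v2 p * ∑ q, v2 q := by
          rw [Finset.mul_sum]
          refine Finset.sum_congr rfl fun q _ => ?_
          rw [hconj, mul_assoc, hsq]
      _ = ((min dA dB : ℕ) : ℂ) * v2 p := by rw [hS]; ring
  have hq := (hpos' X2 (outer_psd v2)).dotProduct_mulVec_nonneg v2
  rw [Matrix.add_mulVec, Matrix.add_mulVec, Matrix.add_mulVec, dotProduct_add, dotProduct_add,
    dotProduct_add, Matrix.smul_mulVec, Matrix.smul_mulVec, Matrix.smul_mulVec,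
    Matrix.smul_mulVec, Matrix.one_mulVec, hKv1, hKv2, hX2v, dotProduct_smul,
    dotProduct_smul, dotProduct_smul, dotProduct_smul, dotProduct_smul, hvv, htr2] at hq
  set N : ℝ := ((min dA dB : ℕ) : ℝ) with hNdef
  have hN : (0 : ℝ) < N := by
    rw [hNdef]
    exact_mod_cast lt_min (show 0 < dA by omega) (show 0 < dB by omega)
  have hcast : (((min dA dB : ℕ) : ℂ)) = ((N : ℝ) : ℂ) := by
    rw [hNdef]; norm_cast
  rw [show ((min dA dB : ℕ) : ℂ) • ((min dA dB : ℕ) : ℂ) + (α : ℂ) • ((min dA dB : ℕ) : ℂ)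
      + (β : ℂ) • ((min dA dB : ℕ) : ℂ)
      + (γ : ℂ) • (((min dA dB : ℕ) : ℂ) • ((min dA dB : ℕ) : ℂ))
      = (((N * N + α * N + β * N + γ * (N * N) : ℝ)) : ℂ) by
    rw [hcast]; simp only [smul_eq_mul]; push_cast; ring] at hq
  have h4 : 0 ≤ N * N + α * N + β * N + γ * (N * N) := Complex.zero_le_real.1 hq
  have h5 : 0 ≤ (N * N + α * N + β * N + γ * (N * N)) / (N * N) :=
    div_nonneg h4 (by positivity)
  rw [show (N * N + α * N + β * N + γ * (N * N)) / (N * N) = 1 + (α + β) / N + γ by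
    field_simp; ring] at h5
  have : (min dA dB : ℝ) = N := by rw [hNdef]; push_cast; ring
  rw [this]
  exact h5
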